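/- Let A, B be finite nonempty sets of integers with gcd*(A) > 1 and gcd*(A+B) = 1. Then |A+B| ≥ 2|A| + |B| - 2. -/

import Mathlib

open scoped Pointwise

theorem stmt14 (A B : Finset ℤ) (hA : A.Nonempty) (hB : B.Nonempty)
    (hgcdA : 1 < (A.image (fun z => z - A.min' hA)).gcd id)
    (hgcdAB : ((A + B).image (fun z => z - (A + B).min' (hA.add hB))).gcd id = 1) :
    (2 : ℤ) * (A.card : ℤ) + (B.card : ℤ) - 2 ≤ ((A + B).card : ℤ) := by
  classical
  set d : ℤ := (A.image (fun z => z - A.min' hA)).gcd id with hd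
  -- d divides all differences of A
  have hdA : ∀ x ∈ A, ∀ y ∈ A, d ∣ x - y := by
    intro x hx y hy
    have h1 : d ∣ x - A.min' hA :=
      Finset.gcd_dvd (Finset.mem_image_of_mem _ hx)
    have h2 : d ∣ y - A.min' hA :=
      Finset.gcd_dvd (Finset.mem_image_of_mem _ hy)
    have := dvd_sub h1 h2
    simpa using this
  -- there exist two elements of B not congruent mod d
  have hexists : ∃ b₁ ∈ B, ∃ b₂ ∈ B, ¬ d ∣ b₁ - b₂ := by
    by_contra hcon
    push_neg at hcon
    have hall : ∀ z ∈ (A + B).image (fun z => z - (A + B).min' (hA.add hB)), d ∣ z := by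
      intro z hz
      rw [Finset.mem_image] at hz
      obtain ⟨w, hw, rfl⟩ := hz
      obtain ⟨a, ha, b, hb, rfl⟩ := Finset.mem_add.1 hw
      have hm := (A + B).min'_mem (hA.add hB)
      obtain ⟨a', ha', b', hb', hm'⟩ := Finset.mem_add.1 hm
      rw [← hm']
      have heq : a + b - (a' + b') = (a - a') + (b - b') := by ring
      rw [heq]
      exact dvd_add (hdA a ha a' ha') (hcon b hb b' hb')
    have hdvd1 : d ∣ 1 := by
      rw [← hgcdAB]
      exact Finset.dvd_gcd (fun z hz => hall z hz)
    have := Int.le_of_dvd one_pos hdvd1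
    omega
  obtain ⟨b₁, hb₁, b₂, hb₂, hnd⟩ := hexists
  -- split B
  set B₁ : Finset ℤ := B.filter (fun b => d ∣ b - b₁) with hB₁def
  set B₂ : Finset ℤ := B \ B₁ with hB₂def
  have hb₁mem : b₁ ∈ B₁ := Finset.mem_filter.2 ⟨hb₁, by simp⟩
  have hb₂mem : b₂ ∈ B₂ := by
    rw [hB₂def, Finset.mem_sdiff]
    refine ⟨hb₂, fun h => ?_⟩
    have h2 := (Finset.mem_filter.1 h).2
    exact hnd (by rw [← neg_sub]; exact dvd_neg.2 h2)
  -- A + B₁ and A + B₂ are disjoint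
  have hdisj : Disjoint (A + B₁) (A + B₂) := by
    rw [Finset.disjoint_left]
    intro x hx hx'
    obtain ⟨a, ha, b, hb, rfl⟩ := Finset.mem_add.1 hx
    obtain ⟨a', ha', b', hb', heq⟩ := Finset.mem_add.1 hx'
    have hbB₁ : d ∣ b - b₁ := (Finset.mem_filter.1 hb).2
    have hb'B₂ := Finset.mem_sdiff.1 hb'
    apply hb'B₂.2
    refine Finset.mem_filter.2 ⟨hb'B₂.1, ?_⟩
    have hdiff : d ∣ b - b' := by
      have h3 : b - b' = a' - a := by linarith [heq]
      rw [h3]; exact hdA a' ha' a ha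
    have : b' - b₁ = (b - b₁) - (b - b') := by ring
    rw [this]
    exact dvd_sub hbB₁ hdiff
  -- union is contained in A + B
  have hsub : (A + B₁) ∪ (A + B₂) ⊆ A + B := by
    apply Finset.union_subset
    · exact Finset.add_subset_add_left (Finset.filter_subset _ _)
    · exact Finset.add_subset_add_left (Finset.sdiff_subset)
  have hcard_union : (A + B₁).card + (A + B₂).card ≤ (A + B).card := by
    rw [← Finset.card_union_of_disjoint hdisj]
    exact Finset.card_le_card hsub
  have hCD₁ : A.card + B₁.card - 1 ≤ (A + B₁).card :=
    cauchy_davenport_add_of_linearOrder_isCancelAdd hA ⟨b₁, hb₁mem⟩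
  have hCD₂ : A.card + B₂.card - 1 ≤ (A + B₂).card :=
    cauchy_davenport_add_of_linearOrder_isCancelAdd hA ⟨b₂, hb₂mem⟩
  have hBsplit : B₂.card + B₁.card = B.card :=
    Finset.card_sdiff_add_card_eq_card (Finset.filter_subset _ _)
  have hA1 : 1 ≤ A.card := Finset.card_pos.2 hA
  have hB1 : 1 ≤ B₁.card := Finset.card_pos.2 ⟨b₁, hb₁mem⟩
  have hB2 : 1 ≤ B₂.card := Finset.card_pos.2 ⟨b₂, hb₂mem⟩
  have hfinal : 2 * A.card + B.card - 2 ≤ (A + B).card := by omega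

  push_cast at hfinal ⊢
  omega
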